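/- arXiv:1705.06873 — 7 statements merged into one kernel-verified Lean document; each statement's English description precedes it below -/
import Mathlib

section
/- For every p ∈ (0,1) and every natural number l ≥ 1, Φ_p(l) := ∏_{k=1}^l (1-p)/(1-p+p^{k+1}) satisfies Φ_p(l) ≥ exp(-(p/(1-p))^2). -/
noncomputable def Phi (p : ℝ) (l : ℕ) : ℝ :=
  ∏ k ∈ Finset.Icc 1 l, (1 - p) / (1 - p + p ^ (k + 1))

theorem stmt_1 (p : ℝ) (hp : 0 < p) (hp1 : p < 1) (l : ℕ) (hl : 1 ≤ l) :
    Phi p l ≥ Real.exp (-(p / (1 - p)) ^ 2) := by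
  have h1 : (0:ℝ) < 1 - p := by linarith
  -- each factor ≥ exp(-(p^(k+1)/(1-p)))
  have hfac : ∀ k ∈ Finset.Icc 1 l,
      Real.exp (-(p ^ (k + 1) / (1 - p))) ≤ (1 - p) / (1 - p + p ^ (k + 1)) := by
    intro k _
    have hpk : (0:ℝ) < p ^ (k + 1) := pow_pos hp _
    set x : ℝ := p ^ (k + 1) / (1 - p) with hxdef
    have hx : x + 1 ≤ Real.exp x := Real.add_one_le_exp _
    have hden : (0:ℝ) < 1 - p + p ^ (k + 1) := by linarith
    have hmul : Real.exp (-x) * Real.exp x = 1 := by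
      rw [← Real.exp_add]; simp
    have hxe : (1 - p) * x = p ^ (k + 1) := by
      rw [hxdef]; field_simp [h1.ne']
    have hposex : (0:ℝ) < Real.exp (-x) := Real.exp_pos _
    rw [le_div_iff₀ hden]
    have h2 : Real.exp (-x) * (x + 1) ≤ 1 := by
      calc Real.exp (-x) * (x + 1) ≤ Real.exp (-x) * Real.exp x :=
            mul_le_mul_of_nonneg_left hx hposex.le
        _ = 1 := hmul
    calc Real.exp (-x) * (1 - p + p ^ (k + 1))
        = (1 - p) * (Real.exp (-x) * (x + 1)) := by rw [← hxe]; ring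
      _ ≤ (1 - p) * 1 := mul_le_mul_of_nonneg_left h2 h1.le
      _ = 1 - p := mul_one _
  have hprod : ∏ k ∈ Finset.Icc 1 l, Real.exp (-(p ^ (k + 1) / (1 - p))) ≤ Phi p l := by
    apply Finset.prod_le_prod
    · intro k _; exact (Real.exp_pos _).le
    · exact hfac
  rw [← Real.exp_sum] at hprod
  refine le_trans ?_ hprod
  apply Real.exp_le_exp.mpr
  have hsum : ∑ k ∈ Finset.Icc 1 l, p ^ (k + 1) ≤ p ^ 2 / (1 - p) := by
    have key : ∀ n : ℕ, ∑ k ∈ Finset.Icc 1 n, p ^ (k + 1)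
        = p ^ 2 * ∑ j ∈ Finset.range n, p ^ j := by
      intro n
      induction n with
      | zero => simp
      | succ m ih =>
        rw [Finset.sum_Icc_succ_top (Nat.le_add_left 1 m), ih, Finset.sum_range_succ]
        ring
    rw [key]
    have hgs : ∑ j ∈ Finset.range l, p ^ j ≤ 1 / (1 - p) := by
      rw [le_div_iff₀ h1]
      nlinarith [geom_sum_mul p l, pow_nonneg hp.le l]
    calc p ^ 2 * ∑ j ∈ Finset.range l, p ^ j ≤ p ^ 2 * (1 / (1 - p)) :=
          mul_le_mul_of_nonneg_left hgs (by positivity)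
      _ = p ^ 2 / (1 - p) := by ring
  have hrw : ∑ k ∈ Finset.Icc 1 l, -(p ^ (k + 1) / (1 - p)) =
      -((∑ k ∈ Finset.Icc 1 l, p ^ (k + 1)) / (1 - p)) := by
    rw [Finset.sum_neg_distrib, Finset.sum_div]
  rw [hrw, neg_le_neg_iff, div_pow, div_le_div_iff₀ h1 (by positivity)]
  calc (∑ k ∈ Finset.Icc 1 l, p ^ (k + 1)) * (1 - p) ^ 2
      ≤ (p ^ 2 / (1 - p)) * (1 - p) ^ 2 := by
        apply mul_le_mul_of_nonneg_right hsum (by positivity)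
    _ = p ^ 2 * (1 - p) := by field_simp
end

section
/- For every p ∈ (0,1) and l ≥ 1, Φ_p(l) ≥ (l/(l + (p/(1-p))^2 · (1 - p^l)))^l. -/
theorem stmt_2 (p : ℝ) (hp : 0 < p) (hp1 : p < 1) (l : ℕ) (hl : 1 ≤ l) :
    Phi p l ≥ ((l : ℝ) / ((l : ℝ) + (p / (1 - p)) ^ 2 * (1 - p ^ l))) ^ l := by
  have hq : (0:ℝ) < 1 - p := by linarith
  have hl0 : (0:ℝ) < (l:ℝ) := by exact_mod_cast Nat.lt_of_lt_of_le Nat.zero_lt_one hl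
  set z : ℕ → ℝ := fun k => 1 + p ^ (k + 1) / (1 - p) with hz
  have hzpos : ∀ k, 0 < z k := fun k => by
    have : 0 < p ^ (k+1) := pow_pos hp _
    simp only [hz]
    positivity
  -- geometric sum identity
  have hgeo0 : ∀ n : ℕ, ∑ k ∈ Finset.Icc 1 n, p ^ (k + 1) = p ^ 2 * (1 - p ^ n) / (1 - p) := by
    intro n
    induction n with
    | zero => simp
    | succ n ih =>
      rw [Finset.sum_Icc_succ_top (by omega : 1 ≤ n + 1), ih]
      field_simp
      ring
  have hgeo := hgeo0 l
  -- sum of z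
  have hS : ∑ k ∈ Finset.Icc 1 l, z k
      = (l : ℝ) + (p / (1 - p)) ^ 2 * (1 - p ^ l) := by
    simp only [hz]
    rw [Finset.sum_add_distrib, ← Finset.sum_div, hgeo]
    rw [Finset.sum_const, Nat.card_Icc, Nat.add_sub_cancel]
    field_simp
    ring
  set S : ℝ := (l : ℝ) + (p / (1 - p)) ^ 2 * (1 - p ^ l) with hSdef
  have hpl : p ^ l < 1 := pow_lt_one₀ hp.le hp1 (by omega)
  have hSpos : 0 < S := by
    have h1 : 0 ≤ (p / (1 - p)) ^ 2 * (1 - p ^ l) :=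
      mul_nonneg (by positivity) (by linarith)
    have := hl0
    simp only [hSdef]
    linarith
  -- Phi as inverse of product of z
  have hPhi : Phi p l = (∏ k ∈ Finset.Icc 1 l, z k)⁻¹ := by
    rw [Phi, ← Finset.prod_inv_distrib]
    refine Finset.prod_congr rfl fun k _ => ?_
    have hd : 0 < 1 - p + p ^ (k + 1) := by positivity
    simp only [hz]
    rw [eq_comm, inv_eq_iff_eq_inv, inv_div]
    field_simp
  -- AM-GM
  have hamgm := Real.geom_mean_le_arith_mean_weighted (Finset.Icc 1 l)
    (fun _ => ((l:ℝ))⁻¹) z (fun i _ => by positivity)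
    (by rw [Finset.sum_const, Nat.card_Icc, Nat.add_sub_cancel, nsmul_eq_mul]; field_simp)
    (fun i _ => (hzpos i).le)
  rw [Real.finset_prod_rpow _ _ (fun i _ => (hzpos i).le)] at hamgm
  have hsum : ∑ i ∈ Finset.Icc 1 l, ((l:ℝ))⁻¹ * z i = S / l := by
    rw [← Finset.mul_sum, hS]; ring
  rw [hsum] at hamgm
  have hprodpos : 0 < ∏ k ∈ Finset.Icc 1 l, z k :=
    Finset.prod_pos fun i _ => hzpos i
  have hln : l ≠ 0 := by omega
  have hkey : ∏ k ∈ Finset.Icc 1 l, z k ≤ (S / l) ^ l := by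
    have := pow_le_pow_left₀ (Real.rpow_nonneg hprodpos.le _) hamgm l
    rwa [Real.rpow_inv_natCast_pow hprodpos.le hln] at this
  rw [hPhi, hS] at *
  rw [ge_iff_le]
  have hSl : (0:ℝ) < (S / l) ^ l := by positivity
  calc ((l:ℝ) / S) ^ l = ((S / l) ^ l)⁻¹ := by
        rw [← inv_pow, inv_div]
    _ ≤ (∏ k ∈ Finset.Icc 1 l, z k)⁻¹ :=
        inv_anti₀ hprodpos hkey
end

section
/- For p ∈ (0,1) and real z with 0 < z < 1, the function H_p(z) = ∑_{l≥1} Φ_p(l)^2 z^l satisfies the functional equation (z-1)·H_p(z) = (2p/(1-p))·H_p(pz) + (p/(1-p))^2·H_p(p^2 z) − z. -/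
noncomputable def H (p : ℝ) (z : ℝ) : ℝ :=
  ∑' l : ℕ, Phi p (l + 1) ^ 2 * z ^ (l + 1)

lemma Phi_pos {p : ℝ} (hp : 0 < p) (hp1 : p < 1) (l : ℕ) : 0 < Phi p l := by
  apply Finset.prod_pos
  intro k _
  have h1 : 0 < 1 - p := by linarith
  positivity

lemma Phi_le_one {p : ℝ} (hp : 0 < p) (hp1 : p < 1) (l : ℕ) : Phi p l ≤ 1 := by
  apply Finset.prod_le_one
  · intro k _
    have h1 : 0 < 1 - p := by linarith
    positivity
  · intro k _
    have h1 : 0 < 1 - p := by linarith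
    have h2 : 0 < p ^ (k + 1) := by positivity
    rw [div_le_one (by linarith)]
    linarith

lemma Phi_zero (p : ℝ) : Phi p 0 = 1 := by simp [Phi]

lemma Phi_succ (p : ℝ) (l : ℕ) :
    Phi p (l + 1) = Phi p l * ((1 - p) / (1 - p + p ^ (l + 2))) := by
  rw [Phi, Phi, Finset.prod_Icc_succ_top (by omega)]

lemma summable_aux {p : ℝ} (hp : 0 < p) (hp1 : p < 1) {z : ℝ} (hz : |z| < 1)
    (f : ℕ → ℕ) (hf : ∀ l, l ≤ f l) :
    Summable (fun l : ℕ => Phi p (f l) ^ 2 * z ^ (l + 1)) := by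
  apply Summable.of_norm
  have hg : Summable (fun l : ℕ => |z| ^ (l + 1)) := by
    simpa [pow_succ, mul_comm] using
      (summable_geometric_of_lt_one (abs_nonneg z) hz).mul_left |z|
  refine hg.of_nonneg_of_le (fun l => norm_nonneg _) (fun l => ?_)
  have h1 := Phi_pos hp hp1 (f l)
  have h2 := Phi_le_one hp hp1 (f l)
  have : ‖Phi p (f l) ^ 2 * z ^ (l + 1)‖ = Phi p (f l) ^ 2 * |z| ^ (l + 1) := by
    rw [norm_mul, norm_pow, norm_pow, Real.norm_eq_abs, Real.norm_eq_abs,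
      abs_of_pos h1]
  rw [this]
  have hsq : Phi p (f l) ^ 2 ≤ 1 := by nlinarith
  exact mul_le_of_le_one_left (pow_nonneg (abs_nonneg z) (l + 1)) hsq

lemma key {p : ℝ} (hp : 0 < p) (hp1 : p < 1) (z : ℝ) (l : ℕ) :
    2 * p / (1 - p) * (Phi p (l + 1) ^ 2 * (p * z) ^ (l + 1))
      + (p / (1 - p)) ^ 2 * (Phi p (l + 1) ^ 2 * (p ^ 2 * z) ^ (l + 1))
      = Phi p l ^ 2 * z ^ (l + 1) - Phi p (l + 1) ^ 2 * z ^ (l + 1) := by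
  have h1 : (0:ℝ) < 1 - p := by linarith
  have hD : 0 < 1 - p + p ^ (l + 2) := by positivity
  rw [Phi_succ]
  have e1 : (p * z) ^ (l + 1) = p ^ (l + 1) * z ^ (l + 1) := mul_pow _ _ _
  have e2 : (p ^ 2 * z) ^ (l + 1) = (p ^ (l + 1)) ^ 2 * z ^ (l + 1) := by
    rw [mul_pow, ← pow_mul, ← pow_mul, Nat.mul_comm]
  have e3 : p ^ (l + 2) = p * p ^ (l + 1) := by ring
  rw [e1, e2, e3]
  field_simp
  ring

theorem stmt_7 (p : ℝ) (hp : 0 < p) (hp1 : p < 1) (z : ℝ) (hz0 : 0 < z) (hz1 : z < 1) :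
    (z - 1) * H p z = (2 * p / (1 - p)) * H p (p * z)
      + (p / (1 - p)) ^ 2 * H p (p ^ 2 * z) - z := by
  have hz : |z| < 1 := abs_lt.mpr ⟨by linarith, hz1⟩
  have hpz : |p * z| < 1 := by
    rw [abs_of_pos (by positivity)]; nlinarith
  have hp2z : |p ^ 2 * z| < 1 := by
    rw [abs_of_pos (by positivity)]; nlinarith
  have S1 := summable_aux hp hp1 hz (fun l => l + 1) (fun l => Nat.le_succ l)
  have S1' := summable_aux hp hp1 hz (fun l => l) (fun l => le_refl l)
  have S2 := summable_aux hp hp1 hpz (fun l => l + 1) (fun l => Nat.le_succ l)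
  have S3 := summable_aux hp hp1 hp2z (fun l => l + 1) (fun l => Nat.le_succ l)
  have hH2 : (2 * p / (1 - p)) * H p (p * z)
      = ∑' l : ℕ, 2 * p / (1 - p) * (Phi p (l + 1) ^ 2 * (p * z) ^ (l + 1)) := by
    rw [H, tsum_mul_left]
  have hH3 : (p / (1 - p)) ^ 2 * H p (p ^ 2 * z)
      = ∑' l : ℕ, (p / (1 - p)) ^ 2 * (Phi p (l + 1) ^ 2 * (p ^ 2 * z) ^ (l + 1)) := by
    rw [H, tsum_mul_left]
  have hsum : (2 * p / (1 - p)) * H p (p * z) + (p / (1 - p)) ^ 2 * H p (p ^ 2 * z)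
      = ∑' l : ℕ, (Phi p l ^ 2 * z ^ (l + 1) - Phi p (l + 1) ^ 2 * z ^ (l + 1)) := by
    rw [hH2, hH3, ← Summable.tsum_add (S2.mul_left _) (S3.mul_left _)]
    exact tsum_congr fun l => key hp hp1 z l
  have hsplit : ∑' l : ℕ, (Phi p l ^ 2 * z ^ (l + 1) - Phi p (l + 1) ^ 2 * z ^ (l + 1))
      = (∑' l : ℕ, Phi p l ^ 2 * z ^ (l + 1)) - H p z := by
    rw [Summable.tsum_sub S1' S1]; rfl
  have hfirst : (∑' l : ℕ, Phi p l ^ 2 * z ^ (l + 1)) = z + z * H p z := by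
    rw [Summable.tsum_eq_zero_add S1']
    have : (∑' l : ℕ, Phi p (l + 1) ^ 2 * z ^ (l + 1 + 1))
        = z * ∑' l : ℕ, Phi p (l + 1) ^ 2 * z ^ (l + 1) := by
      rw [← tsum_mul_left]
      exact tsum_congr fun l => by ring
    rw [this, Phi_zero, H]
    ring
  rw [hsum, hsplit, hfirst]
  ring
end

section
/- For p ∈ (0,1/2), h_p((1-p)/p) ≥ 2·H_p(1-p) ≥ 2·exp(-2(p/(1-p))^2)·(1-p)/p, where h_p(x) = 2H_p(px) + (p/(1-p))H_p(p^2 x) and H_p(z) = ∑_{l≥1} Φ_p(l)^2 z^l. -/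
noncomputable def h (p : ℝ) (x : ℝ) : ℝ :=
  2 * H p (p * x) + (p / (1 - p)) * H p (p ^ 2 * x)

theorem stmt_11 (p : ℝ) (hp : 0 < p) (hp1 : p < 1 / 2) :
    h p ((1 - p) / p) ≥ 2 * H p (1 - p) ∧
    2 * H p (1 - p) ≥ 2 * Real.exp (-2 * (p / (1 - p)) ^ 2) * ((1 - p) / p) := by
  have hp2 : p < 1 := by linarith
  have h1p : 0 < 1 - p := by linarith
  have hden : ∀ k : ℕ, 0 < 1 - p + p ^ (k + 1) := fun k =>
    add_pos_of_pos_of_nonneg h1p (pow_nonneg hp.le _)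
  have hPhi_nonneg : ∀ l, 0 ≤ Phi p l := fun l =>
    Finset.prod_nonneg fun k _ => div_nonneg h1p.le (hden k).le
  have hPhi_le_one : ∀ l, Phi p l ≤ 1 := by
    intro l
    apply Finset.prod_le_one
    · intro k _; exact div_nonneg h1p.le (hden k).le
    · intro k _
      rw [div_le_one (hden k)]
      nlinarith [pow_nonneg hp.le (k + 1)]
  -- key: Phi p l ≥ exp (-(p/(1-p))^2)
  have key : ∀ l : ℕ, Real.exp (-((p / (1 - p)) ^ 2)) ≤ Phi p l := by
    intro l
    have hS : ∑ k ∈ Finset.Icc 1 l, p ^ (k + 1) ≤ p ^ 2 / (1 - p) := by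
      have hgsum : Summable (fun k : ℕ => p ^ k * p ^ 2) :=
        (summable_geometric_of_lt_one hp.le hp2).mul_right (p ^ 2)
      have hre : ∑ k ∈ Finset.Icc 1 l, p ^ (k + 1) = ∑ k ∈ Finset.range l, p ^ k * p ^ 2 := by
        induction l with
        | zero => simp
        | succ n ih =>
          rw [Finset.sum_Icc_succ_top (Nat.succ_le_succ (Nat.zero_le n)),
            Finset.sum_range_succ, ih]
          ring
      have hle := Summable.sum_le_tsum (Finset.range l)
        (fun k _ => mul_nonneg (pow_nonneg hp.le _) (sq_nonneg p)) hgsum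
      rw [tsum_mul_right, tsum_geometric_of_lt_one hp.le hp2] at hle
      rw [hre]
      calc ∑ k ∈ Finset.range l, p ^ k * p ^ 2 ≤ (1 - p)⁻¹ * p ^ 2 := hle
        _ = p ^ 2 / (1 - p) := by ring
    have hsum : ∑ k ∈ Finset.Icc 1 l, p ^ (k + 1) / (1 - p) ≤ (p / (1 - p)) ^ 2 := by
      rw [← Finset.sum_div]
      calc (∑ k ∈ Finset.Icc 1 l, p ^ (k + 1)) / (1 - p)
          ≤ (p ^ 2 / (1 - p)) / (1 - p) := by gcongr
        _ = (p / (1 - p)) ^ 2 := by field_simp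
    calc Real.exp (-((p / (1 - p)) ^ 2))
        ≤ Real.exp (-(∑ k ∈ Finset.Icc 1 l, p ^ (k + 1) / (1 - p))) := by
          apply Real.exp_le_exp.mpr; linarith
      _ = ∏ k ∈ Finset.Icc 1 l, Real.exp (-(p ^ (k + 1) / (1 - p))) := by
          rw [← Real.exp_sum, ← Finset.sum_neg_distrib]
      _ ≤ Phi p l := by
          apply Finset.prod_le_prod (fun k _ => (Real.exp_pos _).le)
          intro k _
          have hd : 0 < p ^ (k + 1) / (1 - p) + 1 := by positivity
          have h1 : p ^ (k + 1) / (1 - p) + 1 ≤ Real.exp (p ^ (k + 1) / (1 - p)) :=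
            Real.add_one_le_exp _
          have heq : (1 - p) / (1 - p + p ^ (k + 1)) = (p ^ (k + 1) / (1 - p) + 1)⁻¹ := by
            rw [inv_eq_one_div, div_eq_div_iff (hden k).ne' hd.ne']
            field_simp
            ring
          rw [Real.exp_neg, heq]
          exact inv_anti₀ hd h1
  -- geometric sums
  have hgeo : Summable (fun l : ℕ => (1 - p) ^ l * (1 - p)) :=
    (summable_geometric_of_lt_one h1p.le (by linarith)).mul_right (1 - p)
  have hgeo' : Summable (fun l : ℕ => (1 - p) ^ (l + 1)) := by
    simpa [pow_succ] using hgeo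
  have htgeo : ∑' l : ℕ, (1 - p) ^ (l + 1) = (1 - p) / p := by
    calc ∑' l : ℕ, (1 - p) ^ (l + 1) = ∑' l : ℕ, (1 - p) ^ l * (1 - p) := by
          apply tsum_congr; intro l; rw [pow_succ]
      _ = (1 - (1 - p))⁻¹ * (1 - p) := by
          rw [tsum_mul_right, tsum_geometric_of_lt_one h1p.le (by linarith)]
      _ = (1 - p) / p := by rw [show (1 : ℝ) - (1 - p) = p by ring]; ring
  have hHsummable : Summable (fun l : ℕ => Phi p (l + 1) ^ 2 * (1 - p) ^ (l + 1)) := by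
    apply Summable.of_nonneg_of_le
      (fun l => mul_nonneg (sq_nonneg _) (pow_nonneg h1p.le _))
      (fun l => ?_) hgeo'
    exact mul_le_of_le_one_left (pow_nonneg h1p.le _)
      (pow_le_one₀ (hPhi_nonneg _) (hPhi_le_one _))
  have hexp2 : Real.exp (-2 * (p / (1 - p)) ^ 2) = Real.exp (-((p / (1 - p)) ^ 2)) ^ 2 := by
    conv_rhs => rw [sq, ← Real.exp_add]
    congr 1; ring
  have hlow : Real.exp (-2 * (p / (1 - p)) ^ 2) * ((1 - p) / p) ≤ H p (1 - p) := by
    have hterm : ∀ l : ℕ, Real.exp (-2 * (p / (1 - p)) ^ 2) * (1 - p) ^ (l + 1)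
        ≤ Phi p (l + 1) ^ 2 * (1 - p) ^ (l + 1) := by
      intro l
      apply mul_le_mul_of_nonneg_right _ (pow_nonneg h1p.le _)
      rw [hexp2]
      exact pow_le_pow_left₀ (Real.exp_pos _).le (key (l + 1)) 2
    have hsL : Summable (fun l : ℕ => Real.exp (-2 * (p / (1 - p)) ^ 2) * (1 - p) ^ (l + 1)) :=
      hgeo'.mul_left _
    have := Summable.tsum_le_tsum hterm hsL hHsummable
    rw [tsum_mul_left, htgeo] at this
    exact this
  constructor
  · unfold h
    have e1 : p * ((1 - p) / p) = 1 - p := by field_simp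
    have e2 : p ^ 2 * ((1 - p) / p) = p * (1 - p) := by field_simp
    rw [e1, e2]
    have hH2 : 0 ≤ H p (p * (1 - p)) := by
      apply tsum_nonneg
      intro l
      exact mul_nonneg (sq_nonneg _) (pow_nonneg (mul_nonneg hp.le h1p.le) _)
    have hpd : 0 ≤ p / (1 - p) := div_nonneg hp.le h1p.le
    nlinarith
  · have : 2 * Real.exp (-2 * (p / (1 - p)) ^ 2) * ((1 - p) / p) =
        2 * (Real.exp (-2 * (p / (1 - p)) ^ 2) * ((1 - p) / p)) := by ring
    rw [ge_iff_le, this]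
    linarith
end

section
/- For p ∈ (0,1) and l ≥ 1, Φ_p(l)^2 ≥ 1 − 2(p/(1-p))^2, where Φ_p(l) = ∏_{k=1}^l (1-p)/(1-p+p^{k+1}). -/
lemma weier (s : Finset ℕ) (a : ℕ → ℝ) (h0 : ∀ k ∈ s, 0 ≤ a k) (h1 : ∀ k ∈ s, a k ≤ 1) :
    1 - ∑ k ∈ s, a k ≤ ∏ k ∈ s, (1 - a k) := by
  induction s using Finset.induction with
  | empty => simp
  | @insert x s hx ih =>
    rw [Finset.sum_insert hx, Finset.prod_insert hx]
    have h0' := h0 x (Finset.mem_insert_self x s)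
    have h1' := h1 x (Finset.mem_insert_self x s)
    have ih' := ih (fun k hk => h0 k (Finset.mem_insert_of_mem hk))
      (fun k hk => h1 k (Finset.mem_insert_of_mem hk))
    have hs : 0 ≤ ∑ k ∈ s, a k :=
      Finset.sum_nonneg fun k hk => h0 k (Finset.mem_insert_of_mem hk)
    nlinarith [mul_nonneg h0' hs]

theorem stmt_12 (p : ℝ) (hp : 0 < p) (hp1 : p < 1 / 2) (l : ℕ) (hl : 1 ≤ l) :
    Phi p l ^ 2 ≥ 1 - 2 * (p / (1 - p)) ^ 2 := by
  have hp2 : p < 1 := by linarith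
  have h1p : 0 < 1 - p := by linarith
  set r : ℝ := p / (1 - p) with hr
  have hrlt : r < 1 := by rw [hr, div_lt_one h1p]; linarith
  have hr0 : 0 ≤ r := div_nonneg hp.le h1p.le
  have hrsq : r ^ 2 = p ^ 2 / (1 - p) ^ 2 := by rw [hr, div_pow]
  have key : 1 - r ^ 2 ≤ Phi p l := by
    have step1 : ∀ k ∈ Finset.Icc 1 l,
        1 - p ^ (k + 1) / (1 - p) ≤ (1 - p) / (1 - p + p ^ (k + 1)) := by
      intro k _
      have hpk : 0 < p ^ (k + 1) := pow_pos hp _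
      have hden : 0 < 1 - p + p ^ (k + 1) := by linarith
      rw [← sub_nonneg]
      have heq : (1 - p) / (1 - p + p ^ (k + 1)) - (1 - p ^ (k + 1) / (1 - p)) =
          p ^ (k + 1) * p ^ (k + 1) / ((1 - p) * (1 - p + p ^ (k + 1))) := by
        field_simp
        ring
      rw [heq]
      positivity
    have hfac_nonneg : ∀ k ∈ Finset.Icc 1 l, 0 ≤ 1 - p ^ (k + 1) / (1 - p) := by
      intro k hk
      have hk1 : 1 ≤ k := (Finset.mem_Icc.mp hk).1
      have h1 : p ^ (k + 1) ≤ p ^ 2 := pow_le_pow_of_le_one hp.le hp2.le (by omega)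
      have h2 : p ^ 2 ≤ 1 - p := by nlinarith
      have : p ^ (k + 1) / (1 - p) ≤ 1 := by
        rw [div_le_one h1p]; linarith
      linarith
    have step2 : ∏ k ∈ Finset.Icc 1 l, (1 - p ^ (k + 1) / (1 - p)) ≤ Phi p l :=
      Finset.prod_le_prod hfac_nonneg step1
    refine le_trans ?_ step2
    have hw : 1 - ∑ k ∈ Finset.Icc 1 l, p ^ (k + 1) / (1 - p) ≤
        ∏ k ∈ Finset.Icc 1 l, (1 - p ^ (k + 1) / (1 - p)) := by
      apply weier
      · intro k _; positivity
      · intro k hk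
        have := hfac_nonneg k hk
        linarith
    refine le_trans ?_ hw
    have hgeom : ∑ k ∈ Finset.range l, p ^ k ≤ 1 / (1 - p) := by
      rw [le_div_iff₀ h1p]
      nlinarith [geom_sum_mul p l, pow_nonneg hp.le l]
    have heq2 : ∑ k ∈ Finset.Icc 1 l, p ^ (k + 1) =
        p ^ 2 * ∑ k ∈ Finset.range l, p ^ k := by
      rw [Finset.mul_sum]
      rw [show Finset.Icc 1 l = Finset.Ico 1 (l + 1) from rfl]
      rw [Finset.sum_Ico_eq_sum_range]
      simp only [Nat.add_sub_cancel]
      apply Finset.sum_congr rfl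
      intro k _
      ring
    have hsum : ∑ k ∈ Finset.Icc 1 l, p ^ (k + 1) / (1 - p) ≤ r ^ 2 := by
      rw [← Finset.sum_div, heq2, hrsq, div_le_div_iff₀ h1p (by positivity)]
      have hps : 0 ≤ p ^ 2 := sq_nonneg p
      have h1 : p ^ 2 * ∑ k ∈ Finset.range l, p ^ k ≤ p ^ 2 * (1 / (1 - p)) :=
        mul_le_mul_of_nonneg_left hgeom hps
      have h2 : p ^ 2 * (1 / (1 - p)) * ((1 - p) ^ 2) = p ^ 2 * (1 - p) := by
        field_simp
      nlinarith [sq_nonneg (1 - p)]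
    linarith
  have hnn : 0 ≤ 1 - r ^ 2 := by nlinarith
  have hsq : (1 - r ^ 2) ^ 2 ≤ Phi p l ^ 2 := by nlinarith
  have : (1 : ℝ) - 2 * r ^ 2 ≤ (1 - r ^ 2) ^ 2 := by nlinarith [sq_nonneg (r ^ 2)]
  linarith
end

section
/- For p ∈ (0,1/2) and real x with 0 < x < 1/p, h_p(x) ≥ (1 − 2(p/(1-p))^2)·(2px/(1-px) + (p/(1-p))·p^2x/(1-p^2x)), where h_p(x) = 2H_p(px) + (p/(1-p))H_p(p^2 x) and H_p(z) = ∑_{l≥1} Φ_p(l)^2 z^l. -/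
/-- Weierstrass product inequality. -/
lemma weierstrass (s : Finset ℕ) (f : ℕ → ℝ) (h0 : ∀ k ∈ s, 0 ≤ f k)
    (h1 : ∀ k ∈ s, f k ≤ 1) : 1 - ∑ k ∈ s, f k ≤ ∏ k ∈ s, (1 - f k) := by
  induction s using Finset.cons_induction with
  | empty => simp
  | cons a s ha ih =>
    rw [Finset.sum_cons, Finset.prod_cons]
    have h0' : ∀ k ∈ s, 0 ≤ f k := fun k hk => h0 k (Finset.mem_cons_of_mem hk)
    have h1' : ∀ k ∈ s, f k ≤ 1 := fun k hk => h1 k (Finset.mem_cons_of_mem hk)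
    have ih' := ih h0' h1'
    have ha0 : 0 ≤ f a := h0 a (Finset.mem_cons_self a s)
    have ha1 : f a ≤ 1 := h1 a (Finset.mem_cons_self a s)
    have hs0 : 0 ≤ ∑ k ∈ s, f k := Finset.sum_nonneg h0'
    nlinarith [ih', mul_nonneg ha0 hs0]

lemma Phi_ge {p : ℝ} (hp : 0 < p) (hp1 : p < 1/2) (l : ℕ) :
    1 - (p / (1 - p)) ^ 2 ≤ Phi p l := by
  have h1p : (0:ℝ) < 1 - p := by linarith
  set f : ℕ → ℝ := fun k => p ^ (k+1) / (1 - p) with hf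
  have hpow : ∀ k ∈ Finset.Icc 1 l, p ^ (k+1) ≤ p ^ 2 := by
    intro k hk
    have hk1 : 1 ≤ k := (Finset.mem_Icc.mp hk).1
    exact pow_le_pow_of_le_one hp.le (by linarith) (by omega)
  have hf0 : ∀ k ∈ Finset.Icc 1 l, 0 ≤ f k := by
    intro k _; positivity
  have hf1 : ∀ k ∈ Finset.Icc 1 l, f k ≤ 1 := by
    intro k hk
    rw [div_le_one h1p]
    have := hpow k hk
    nlinarith
  have hstep : ∀ k ∈ Finset.Icc 1 l, 1 - f k ≤ (1 - p) / (1 - p + p ^ (k+1)) := by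
    intro k hk
    have hpk : (0:ℝ) < p ^ (k+1) := pow_pos hp _
    rw [le_div_iff₀ (by linarith), hf]
    have : (1 - p^(k+1)/(1-p)) * (1 - p + p^(k+1))
        = (1-p) - (p^(k+1))^2/(1-p) := by field_simp; ring
    rw [this]
    have : 0 ≤ (p^(k+1))^2 / (1-p) := by positivity
    linarith
  have hsum : ∑ k ∈ Finset.Icc 1 l, f k ≤ (p / (1 - p)) ^ 2 := by
    have hsum1 : ∑ k ∈ Finset.Icc 1 l, p ^ (k+1) ≤ p^2 / (1 - p) := by
      have hre : ∑ k ∈ Finset.Icc 1 l, p ^ (k+1) = p^2 * ∑ j ∈ Finset.range l, p ^ j := by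
        rw [show Finset.Icc 1 l = Finset.Ico 1 (l+1) from by rw [Finset.Ico_add_one_right_eq_Icc],
          Finset.sum_Ico_eq_sum_range]
        simp only [Nat.add_sub_cancel]
        rw [Finset.mul_sum]
        apply Finset.sum_congr rfl
        intro j _
        ring
      rw [hre, div_eq_mul_inv]
      apply mul_le_mul_of_nonneg_left _ (by positivity)
      have hs := Summable.sum_le_tsum (Finset.range l) (fun i _ => by positivity : ∀ i ∉ Finset.range l, 0 ≤ p ^ i)
        (summable_geometric_of_lt_one hp.le (by linarith))
      rwa [tsum_geometric_of_lt_one hp.le (by linarith)] at hs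
    calc ∑ k ∈ Finset.Icc 1 l, f k = (∑ k ∈ Finset.Icc 1 l, p ^ (k+1)) / (1 - p) := by
          rw [Finset.sum_div]
      _ ≤ (p^2 / (1-p)) / (1 - p) := by
          gcongr
      _ = (p / (1 - p)) ^ 2 := by field_simp
  calc 1 - (p / (1 - p)) ^ 2 ≤ 1 - ∑ k ∈ Finset.Icc 1 l, f k := by linarith
    _ ≤ ∏ k ∈ Finset.Icc 1 l, (1 - f k) := weierstrass _ f hf0 hf1
    _ ≤ Phi p l := Finset.prod_le_prod (fun k hk => by linarith [hf1 k hk]) hstep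

lemma H_ge {p : ℝ} (hp : 0 < p) (hp1 : p < 1/2) {z : ℝ} (hz0 : 0 ≤ z) (hz1 : z < 1) :
    (1 - 2 * (p / (1 - p)) ^ 2) * (z / (1 - z)) ≤ H p z := by
  have h1p : (0:ℝ) < 1 - p := by linarith
  have hsumgeo : Summable (fun l : ℕ => z ^ l) := summable_geometric_of_lt_one hz0 hz1
  have hsumg : Summable (fun l : ℕ => z ^ (l+1)) := by
    simpa [pow_succ] using hsumgeo.mul_right z
  have hsumf : Summable (fun l : ℕ => Phi p (l+1) ^ 2 * z ^ (l+1)) := by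
    apply Summable.of_nonneg_of_le (fun l => by
      have := Phi_pos hp (by linarith) (l+1); positivity) _ hsumg
    intro l
    have h1 := Phi_le_one hp (by linarith : p < 1) (l+1)
    have h2 := (Phi_pos hp (by linarith) (l+1)).le
    have hz : (0:ℝ) ≤ z ^ (l+1) := by positivity
    have h3 : Phi p (l+1) ^ 2 ≤ 1 := by nlinarith
    nlinarith [mul_le_mul_of_nonneg_right h3 hz]
  have hterm : ∀ l : ℕ, (1 - 2 * (p/(1-p))^2) * z ^ (l+1) ≤ Phi p (l+1) ^ 2 * z ^ (l+1) := by
    intro l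
    apply mul_le_mul_of_nonneg_right _ (by positivity)
    have h1 := Phi_ge hp hp1 (l+1)
    have hc1 : (p / (1 - p)) ^ 2 < 1 := by
      have hlt : p / (1 - p) < 1 := (div_lt_one h1p).mpr (by linarith)
      nlinarith [div_nonneg hp.le h1p.le]
    nlinarith [sq_nonneg (p/(1-p))]
  have hle : (1 - 2 * (p/(1-p))^2) * ∑' l : ℕ, z ^ (l+1) ≤ H p z := by
    rw [← tsum_mul_left]
    exact Summable.tsum_le_tsum hterm (hsumg.mul_left _) hsumf
  have hgeo : ∑' l : ℕ, z ^ (l+1) = z / (1 - z) := by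
    have : (fun l : ℕ => z ^ (l+1)) = fun l : ℕ => z ^ l * z := by
      funext l; rw [pow_succ]
    rw [this, tsum_mul_right, tsum_geometric_of_lt_one hz0 hz1]
    field_simp
  rw [hgeo] at hle
  exact hle

theorem stmt_13 (p : ℝ) (hp : 0 < p) (hp1 : p < 1 / 2) (x : ℝ) (hx0 : 0 < x)
    (hx : x < 1 / p) :
    h p x ≥ (1 - 2 * (p / (1 - p)) ^ 2) *
      (2 * p * x / (1 - p * x) + (p / (1 - p)) * (p ^ 2 * x / (1 - p ^ 2 * x))) := by
  have h1p : (0:ℝ) < 1 - p := by linarith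
  have hpx0 : 0 < p * x := by positivity
  have hpx1 : p * x < 1 := by
    have := (lt_div_iff₀ hp).mp hx
    linarith [mul_comm p x]
  have hp2x0 : (0:ℝ) ≤ p ^ 2 * x := by positivity
  have hp2x1 : p ^ 2 * x < 1 := by nlinarith
  have H1 := H_ge hp hp1 hpx0.le hpx1
  have H2 := H_ge hp hp1 hp2x0 hp2x1
  have hc : (0:ℝ) ≤ p / (1 - p) := div_nonneg hp.le h1p.le
  calc (1 - 2 * (p / (1 - p)) ^ 2) *
      (2 * p * x / (1 - p * x) + (p / (1 - p)) * (p ^ 2 * x / (1 - p ^ 2 * x)))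
      = 2 * ((1 - 2 * (p / (1 - p)) ^ 2) * (p * x / (1 - p * x)))
        + (p / (1 - p)) * ((1 - 2 * (p / (1 - p)) ^ 2) * (p ^ 2 * x / (1 - p ^ 2 * x))) := by
        ring
    _ ≤ 2 * H p (p * x) + (p / (1 - p)) * H p (p ^ 2 * x) :=
        add_le_add (by linarith) (mul_le_mul_of_nonneg_left H2 hc)
    _ = h p x := rfl
end

section
/- For p ∈ (0,1): β_p(1) = (p/(1-p))·Φ_p(2)^2·(1 − p^2(1-p)(1-p^2)), where β_p(1) = ∑_{m≥0} ∑_{l=1}^{m+1} p^{m+l}(1-p)^{3+m}(m+1)·C(m+1, l) and Φ_p(2) = ((1-p)/(1-p+p^2))·((1-p)/(1-p+p^3)). -/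
lemma aux_sum (r : ℝ) (h : |r| < 1) :
    HasSum (fun n : ℕ => ((n : ℝ) + 1) * r ^ n) (1 / (1 - r) ^ 2) := by
  have hn : ‖r‖ < 1 := by rwa [Real.norm_eq_abs]
  have h1 := hasSum_geometric_of_norm_lt_one hn
  have h2 := hasSum_coe_mul_geometric_of_norm_lt_one hn
  have h3 := h2.add h1
  have hr : (1 : ℝ) - r ≠ 0 := by
    intro hc
    have : r = 1 := by linarith
    simp [this] at h
  have h4 : (fun n : ℕ => ((n : ℝ) + 1) * r ^ n)
      = fun n : ℕ => (n : ℝ) * r ^ n + r ^ n := by funext n; ring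
  rw [h4, show (1 : ℝ) / (1 - r) ^ 2 = r / (1 - r) ^ 2 + (1 - r)⁻¹ by
    field_simp; ring]
  exact h3

theorem stmt_18 (p : ℝ) (hp : 0 < p) (hp1 : p < 1) :
    (∑' m : ℕ, ∑ l ∈ Finset.Icc 1 (m + 1),
        p ^ (m + l) * (1 - p) ^ (3 + m) * (m + 1) * (Nat.choose (m + 1) l))
      = (p / (1 - p)) * Phi p 2 ^ 2 * (1 - p ^ 2 * (1 - p) * (1 - p ^ 2)) := by
  have key : ∀ m : ℕ, (∑ l ∈ Finset.Icc 1 (m + 1),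
      p ^ (m + l) * (1 - p) ^ (3 + m) * (m + 1) * (Nat.choose (m + 1) l))
      = ((m : ℝ) + 1) * ((1 - p) ^ 3 * (1 + p) * (p * (1 - p) * (1 + p)) ^ m)
        - ((m : ℝ) + 1) * ((1 - p) ^ 3 * (p * (1 - p)) ^ m) := by
    intro m
    have hbin : (∑ l ∈ Finset.Icc 1 (m + 1), p ^ l * (Nat.choose (m + 1) l : ℝ))
        = (1 + p) ^ (m + 1) - 1 := by
      have hap := add_pow p 1 (m + 1)
      simp only [one_pow, mul_one] at hap
      have hins : Finset.range (m + 2) = insert 0 (Finset.Icc 1 (m + 1)) := by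
        ext x
        simp [Nat.lt_succ_iff]
        omega
      rw [hins, Finset.sum_insert (by simp)] at hap
      simp at hap
      rw [show (1 : ℝ) + p = p + 1 by ring]
      linarith [hap]
    have hstep : (∑ l ∈ Finset.Icc 1 (m + 1),
        p ^ (m + l) * (1 - p) ^ (3 + m) * (m + 1) * (Nat.choose (m + 1) l))
        = p ^ m * (1 - p) ^ (3 + m) * ((m : ℝ) + 1)
          * (∑ l ∈ Finset.Icc 1 (m + 1), p ^ l * (Nat.choose (m + 1) l : ℝ)) := by
      rw [Finset.mul_sum]
      apply Finset.sum_congr rfl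
      intro l _
      rw [pow_add]
      ring
    rw [hstep, hbin, pow_add, pow_succ]
    simp only [mul_pow]
    ring
  have hcube : 0 < p * (p * p) := mul_pos hp (mul_pos hp hp)
  have ha1 : |p * (1 - p) * (1 + p)| < 1 := by
    rw [abs_lt]; constructor <;> nlinarith
  have hb1 : |p * (1 - p)| < 1 := by
    rw [abs_lt]; constructor <;> nlinarith
  have hA := ((aux_sum _ ha1).mul_left ((1 - p) ^ 3 * (1 + p))).sub
    ((aux_sum _ hb1).mul_left ((1 - p) ^ 3))
  have hfe : (fun m : ℕ => ((m : ℝ) + 1) * ((1 - p) ^ 3 * (1 + p) * (p * (1 - p) * (1 + p)) ^ m)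
        - ((m : ℝ) + 1) * ((1 - p) ^ 3 * (p * (1 - p)) ^ m))
      = fun m : ℕ => (1 - p) ^ 3 * (1 + p) * (((m : ℝ) + 1) * (p * (1 - p) * (1 + p)) ^ m)
        - (1 - p) ^ 3 * (((m : ℝ) + 1) * (p * (1 - p)) ^ m) := by
    funext m; ring
  rw [tsum_congr key, hfe, hA.tsum_eq]
  have h1 : (1 : ℝ) - p * (1 - p) * (1 + p) = 1 - p + p ^ 3 := by ring
  have h2 : (1 : ℝ) - p * (1 - p) = 1 - p + p ^ 2 := by ring
  have hp2 : (1 : ℝ) - p + p ^ 2 ≠ 0 := by nlinarith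
  have hp3 : (1 : ℝ) - p + p ^ 3 ≠ 0 := by nlinarith
  have hp0 : (1 : ℝ) - p ≠ 0 := by linarith
  rw [h1, h2]
  have hPhi : Phi p 2 = ((1 - p) / (1 - p + p ^ 2)) * ((1 - p) / (1 - p + p ^ 3)) := by
    have h12 : Finset.Icc 1 2 = {1, 2} := rfl
    rw [Phi, h12, Finset.prod_insert (by norm_num), Finset.prod_singleton]
  rw [hPhi]
  field_simp
  ring
end
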